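/- Let S¹, S² be n×n doubly stochastic matrices and let X, Y, Z : Fin n → E where E is a normed additive commutative group. Then Σ_{i,j} (S¹·S²)_{i,j} · ‖X_i − Z_j‖ ≤ Σ_{i,k} S¹_{i,k} · ‖X_i − Y_k‖ + Σ_{k,j} S²_{k,j} · ‖Y_k − Z_j‖. -/
import Mathlib


/-- For doubly stochastic `S¹ S²` and node features `X Y Z`,
`Σ_{i,j} (S¹S²)_{ij} ‖X i − Z j‖ ≤ Σ_{i,k} S¹_{ik} ‖X i − Y k‖ + Σ_{k,j} S²_{kj} ‖Y k − Z j‖`. -/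
theorem feature_cost_triangle {n : ℕ} {E : Type*} [NormedAddCommGroup E]
    (S1 S2 : Matrix (Fin n) (Fin n) ℝ)
    (hS1 : S1 ∈ doublyStochastic ℝ (Fin n)) (hS2 : S2 ∈ doublyStochastic ℝ (Fin n))
    (X Y Z : Fin n → E) :
    ∑ i, ∑ j, (S1 * S2) i j * ‖X i - Z j‖ ≤
      (∑ i, ∑ k, S1 i k * ‖X i - Y k‖) + ∑ k, ∑ j, S2 k j * ‖Y k - Z j‖ := by
  rw [mem_doublyStochastic_iff_sum] at hS1 hS2
  obtain ⟨h1n, h1r, h1c⟩ := hS1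
  obtain ⟨h2n, h2r, h2c⟩ := hS2
  have key : ∑ i, ∑ j, (S1 * S2) i j * ‖X i - Z j‖ ≤
      ∑ i, ∑ j, ∑ k, S1 i k * S2 k j * (‖X i - Y k‖ + ‖Y k - Z j‖) := by
    refine Finset.sum_le_sum fun i _ => Finset.sum_le_sum fun j _ => ?_
    rw [Matrix.mul_apply, Finset.sum_mul]
    refine Finset.sum_le_sum fun k _ => ?_
    have hnn : 0 ≤ S1 i k * S2 k j := mul_nonneg (h1n i k) (h2n k j)
    have htri : ‖X i - Z j‖ ≤ ‖X i - Y k‖ + ‖Y k - Z j‖ := norm_sub_le_norm_sub_add_norm_sub _ _ _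
    exact mul_le_mul_of_nonneg_left htri hnn
  refine key.trans_eq ?_
  have expand : ∑ i, ∑ j, ∑ k, S1 i k * S2 k j * (‖X i - Y k‖ + ‖Y k - Z j‖) =
      (∑ i, ∑ j, ∑ k, S1 i k * S2 k j * ‖X i - Y k‖) +
      (∑ i, ∑ j, ∑ k, S1 i k * S2 k j * ‖Y k - Z j‖) := by
    simp [mul_add, Finset.sum_add_distrib]
  rw [expand]
  congr 1
  · refine Finset.sum_congr rfl fun i _ => ?_
    rw [Finset.sum_comm]
    refine Finset.sum_congr rfl fun k _ => ?_
    have : ∑ j, S1 i k * S2 k j * ‖X i - Y k‖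
        = (S1 i k * ‖X i - Y k‖) * ∑ j, S2 k j := by
      rw [Finset.mul_sum]; exact Finset.sum_congr rfl fun j _ => by ring
    rw [this, h2r k, mul_one]
  · rw [Finset.sum_comm,
      show (∑ k, ∑ j, S2 k j * ‖Y k - Z j‖) = ∑ j, ∑ k, S2 k j * ‖Y k - Z j‖ from
        Finset.sum_comm]
    refine Finset.sum_congr rfl fun j _ => ?_
    rw [Finset.sum_comm]
    refine Finset.sum_congr rfl fun k _ => ?_
    have : ∑ i, S1 i k * S2 k j * ‖Y k - Z j‖
        = (∑ i, S1 i k) * (S2 k j * ‖Y k - Z j‖) := by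
      rw [Finset.sum_mul]; exact Finset.sum_congr rfl fun i _ => by ring
    rw [this, h1c k, one_mul]
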